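/- arXiv:2405.04805 — 5 statements merged into one kernel-verified Lean document; each statement's English description precedes it below -/
import Mathlib

section
/- Let X, Y be symmetric positive semidefinite n×n matrices with Y ≠ 0. Then sup over v ∉ ker Y of (vᵀXv)/(vᵀYv) equals inf{α ≥ 0 : αY − X ⪰ 0} (with the convention that the infimum of the empty set is +∞, and the supremum may be +∞). -/
open Matrix
open scoped ENNReal

/-- Extended maximum generalized eigenvalue: `inf {α ≥ 0 | αY − X ⪰ 0}` with `inf ∅ = ∞`. -/
noncomputable def lamMax {n : ℕ} (X Y : Matrix (Fin n) (Fin n) ℝ) : ℝ≥0∞ :=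
  ⨅ α : {α : ℝ // 0 ≤ α ∧ (α • Y - X).PosSemidef}, ENNReal.ofReal (α : ℝ)

section aux

variable {n : ℕ}

lemma dot_pos {Y : Matrix (Fin n) (Fin n) ℝ} (hY : Y.PosSemidef)
    {v : Fin n → ℝ} (hv : Y *ᵥ v ≠ 0) : 0 < v ⬝ᵥ (Y *ᵥ v) := by
  have h0 := hY.dotProduct_mulVec_nonneg v
  simp only [star_trivial] at h0
  rcases h0.lt_or_eq with h | h
  · exact h
  · exact absurd ((hY.dotProduct_mulVec_zero_iff v).mp (by simpa using h.symm)) hv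

lemma quad_expand (X : Matrix (Fin n) (Fin n) ℝ) (hX : X.IsHermitian)
    (w v : Fin n → ℝ) (t : ℝ) :
    (w + t • v) ⬝ᵥ (X *ᵥ (w + t • v)) =
      w ⬝ᵥ (X *ᵥ w) + 2 * t * (v ⬝ᵥ (X *ᵥ w)) + t ^ 2 * (v ⬝ᵥ (X *ᵥ v)) := by
  have hXt : Xᵀ = X := by
    rw [← conjTranspose_eq_transpose_of_trivial]; exact hX.eq
  have hsym : w ⬝ᵥ (X *ᵥ v) = v ⬝ᵥ (X *ᵥ w) := by
    rw [dotProduct_mulVec, ← mulVec_transpose, hXt, dotProduct_comm]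
  simp only [mulVec_add, mulVec_smul, dotProduct_add, add_dotProduct, dotProduct_smul,
    smul_dotProduct, smul_eq_mul]
  rw [hsym]; ring

end aux

/-- For symmetric positive semidefinite `X, Y` with `Y ≠ 0`, the supremum over
`v ∉ ker Y` of the Rayleigh quotient `(vᵀXv)/(vᵀYv)` equals `inf {α ≥ 0 | αY − X ⪰ 0}`
(in `[0,∞]`, with `inf ∅ = ∞`). -/
theorem stmt_3 {n : ℕ} (X Y : Matrix (Fin n) (Fin n) ℝ)
    (hX : X.PosSemidef) (hY : Y.PosSemidef) (hY0 : Y ≠ 0) :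
    (⨆ v : {v : Fin n → ℝ // Y *ᵥ v ≠ 0},
        ENNReal.ofReal (((v : Fin n → ℝ) ⬝ᵥ (X *ᵥ (v : Fin n → ℝ))) /
          ((v : Fin n → ℝ) ⬝ᵥ (Y *ᵥ (v : Fin n → ℝ))))) = lamMax X Y := by
  -- a vector not killed by Y
  obtain ⟨w, hw⟩ : ∃ w : Fin n → ℝ, Y *ᵥ w ≠ 0 := by
    by_contra h
    push_neg at h
    apply hY0
    ext i j
    have := congrFun (h (Pi.single j 1)) i
    simpa [mulVec_single] using this
  set S := (⨆ v : {v : Fin n → ℝ // Y *ᵥ v ≠ 0},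
        ENNReal.ofReal (((v : Fin n → ℝ) ⬝ᵥ (X *ᵥ (v : Fin n → ℝ))) /
          ((v : Fin n → ℝ) ⬝ᵥ (Y *ᵥ (v : Fin n → ℝ))))) with hS
  apply le_antisymm
  · -- S ≤ inf
    refine le_iInf fun ⟨α, hα0, hαpsd⟩ => iSup_le fun ⟨v, hv⟩ => ?_
    have hvY : 0 < v ⬝ᵥ (Y *ᵥ v) := dot_pos hY hv
    have hq := hαpsd.dotProduct_mulVec_nonneg v
    simp only [star_trivial, sub_mulVec, smul_mulVec, dotProduct_sub,
      dotProduct_smul, smul_eq_mul, sub_nonneg] at hq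
    exact ENNReal.ofReal_le_ofReal ((div_le_iff₀ hvY).mpr (by linarith))
  · -- inf ≤ S
    rcases eq_or_ne S ⊤ with h | h
    · simp [h]
    set K := S.toReal with hK
    have hK0 : 0 ≤ K := ENNReal.toReal_nonneg
    have hSK : S = ENNReal.ofReal K := (ENNReal.ofReal_toReal h).symm
    have hle : ∀ v : Fin n → ℝ, Y *ᵥ v ≠ 0 →
        v ⬝ᵥ (X *ᵥ v) / (v ⬝ᵥ (Y *ᵥ v)) ≤ K := by
      intro v hv
      have := le_iSup (fun v : {v : Fin n → ℝ // Y *ᵥ v ≠ 0} =>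
        ENNReal.ofReal (((v : Fin n → ℝ) ⬝ᵥ (X *ᵥ (v : Fin n → ℝ))) /
          ((v : Fin n → ℝ) ⬝ᵥ (Y *ᵥ (v : Fin n → ℝ))))) ⟨v, hv⟩
      rw [← hS, hSK] at this
      exact (ENNReal.ofReal_le_ofReal_iff hK0).mp this
    -- if Yv = 0 then vᵀXv = 0
    have hker : ∀ v : Fin n → ℝ, Y *ᵥ v = 0 → v ⬝ᵥ (X *ᵥ v) = 0 := by
      intro v hv
      by_contra hb
      have hb' : 0 < v ⬝ᵥ (X *ᵥ v) :=
        lt_of_le_of_ne (by simpa using hX.dotProduct_mulVec_nonneg v) (Ne.symm hb)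
      set b := v ⬝ᵥ (X *ᵥ v)
      set a := v ⬝ᵥ (X *ᵥ w)
      set c := w ⬝ᵥ (Y *ᵥ w) with hc
      have hc0 : 0 < c := dot_pos hY hw
      set t : ℝ := max 1 ((2 * |a| + K * c + 1) / b) with ht
      have ht1 : (1:ℝ) ≤ t := le_max_left _ _
      have htb : 2 * |a| + K * c + 1 ≤ t * b := by
        rw [← div_le_iff₀ hb']
        exact le_max_right _ _
      set u := w + t • v with hu
      have huY : Y *ᵥ u = Y *ᵥ w := by
        simp [hu, mulVec_add, mulVec_smul, hv]
      have huYq : u ⬝ᵥ (Y *ᵥ u) = c := by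
        rw [huY, hu]
        have hYt : Yᵀ = Y := by
          rw [← conjTranspose_eq_transpose_of_trivial]; exact hY.1.eq
        have : v ⬝ᵥ (Y *ᵥ w) = 0 := by
          rw [dotProduct_mulVec, ← mulVec_transpose, hYt, hv, zero_dotProduct]
        simp [add_dotProduct, smul_dotProduct, this, hc]
      have hXq : u ⬝ᵥ (X *ᵥ u) = w ⬝ᵥ (X *ᵥ w) + 2 * t * a + t ^ 2 * b :=
        quad_expand X hX.1 w v t
      have hleu := hle u (huY ▸ hw)
      rw [huYq, hXq, div_le_iff₀ hc0] at hleu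
      have hwX : 0 ≤ w ⬝ᵥ (X *ᵥ w) := by simpa using hX.dotProduct_mulVec_nonneg w
      have ht0 : 0 ≤ t := le_trans zero_le_one ht1
      have h1 : t * (2 * |a| + K * c + 1) ≤ t * (t * b) :=
        mul_le_mul_of_nonneg_left htb ht0
      have h2 : -(t * |a|) ≤ t * a := by nlinarith [neg_abs_le a]
      have h3 : K * c + 1 ≤ t * (K * c + 1) :=
        le_mul_of_one_le_left (by positivity) ht1
      nlinarith [h1, h2, h3]
    -- K Y - X is PSD
    have hpsd : (K • Y - X).PosSemidef := by
      refine PosSemidef.of_dotProduct_mulVec_nonneg ?_ ?_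
      · have : (K • Y - X)ᴴ = K • Y - X := by
          rw [conjTranspose_sub, conjTranspose_smul, hY.1.eq, hX.1.eq, star_trivial]
        exact this
      · intro v
        simp only [star_trivial, sub_mulVec, smul_mulVec, dotProduct_sub,
          dotProduct_smul, smul_eq_mul, sub_nonneg]
        rcases eq_or_ne (Y *ᵥ v) 0 with hv | hv
        · rw [hker v hv, hv, dotProduct_zero, mul_zero]
        · have := hle v hv
          have hvY := dot_pos hY hv
          rw [div_le_iff₀ hvY] at this
          linarith
    calc lamMax X Y ≤ ENNReal.ofReal K := iInf_le _ (⟨K, hK0, hpsd⟩ : {α : ℝ // 0 ≤ α ∧ (α • Y - X).PosSemidef})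
      _ = S := hSK.symm
end

section
/- Let X, Y be symmetric positive semidefinite matrices with ker Y ⊆ ker X. Then λ_max(X, Y + εI) converges to λ_max(X,Y) as ε → 0⁺, where λ_max(X,Y) = inf{α ≥ 0 : αY − X ⪰ 0} is finite in this case. -/
open Matrix Filter Topology
open scoped ENNReal

namespace Stmt9Aux

variable {n : ℕ}

lemma dot_self_nonneg (u : Fin n → ℝ) : 0 ≤ u ⬝ᵥ u :=
  Finset.sum_nonneg fun _ _ => mul_self_nonneg _

lemma norm_sq_le_dot (u : Fin n → ℝ) : ‖u‖ ^ 2 ≤ u ⬝ᵥ u := by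
  have h1 : ‖u‖ ≤ Real.sqrt (u ⬝ᵥ u) := by
    rw [pi_norm_le_iff_of_nonneg (Real.sqrt_nonneg _)]
    intro i
    have h2 : u i ^ 2 ≤ u ⬝ᵥ u := by
      have := Finset.single_le_sum (f := fun j => u j * u j)
        (fun j _ => mul_self_nonneg (u j)) (Finset.mem_univ i)
      simpa [pow_two, dotProduct] using this
    calc ‖u i‖ = Real.sqrt (u i ^ 2) := by
          rw [Real.sqrt_sq_eq_abs, Real.norm_eq_abs]
      _ ≤ Real.sqrt (u ⬝ᵥ u) := Real.sqrt_le_sqrt h2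
  calc ‖u‖ ^ 2 ≤ Real.sqrt (u ⬝ᵥ u) ^ 2 := by
        exact pow_le_pow_left₀ (norm_nonneg _) h1 2
    _ = u ⬝ᵥ u := Real.sq_sqrt (dot_self_nonneg u)

lemma dot_le_norm_sq (u : Fin n → ℝ) : u ⬝ᵥ u ≤ n * ‖u‖ ^ 2 := by
  have h : ∀ i : Fin n, u i * u i ≤ ‖u‖ ^ 2 := by
    intro i
    have h1 := norm_le_pi_norm u i
    have h2 : u i * u i = ‖u i‖ ^ 2 := by rw [Real.norm_eq_abs, sq_abs, pow_two]
    nlinarith [norm_nonneg u, norm_nonneg (u i)]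
  calc u ⬝ᵥ u = ∑ i, u i * u i := rfl
    _ ≤ ∑ _i : Fin n, ‖u‖ ^ 2 := Finset.sum_le_sum fun i _ => h i
    _ = n * ‖u‖ ^ 2 := by simp [Finset.sum_const, nsmul_eq_mul]

/-- Scalar feasibility predicate. -/
def feas (X Y : Matrix (Fin n) (Fin n) ℝ) (ε α : ℝ) : Prop :=
  ∀ v : Fin n → ℝ, v ⬝ᵥ X *ᵥ v ≤ α * (v ⬝ᵥ Y *ᵥ v + ε * (v ⬝ᵥ v))

lemma expand_qform (X Y : Matrix (Fin n) (Fin n) ℝ) (ε α : ℝ) (v : Fin n → ℝ) :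
    v ⬝ᵥ ((α • (Y + ε • (1 : Matrix (Fin n) (Fin n) ℝ)) - X) *ᵥ v)
      = α * (v ⬝ᵥ Y *ᵥ v + ε * (v ⬝ᵥ v)) - v ⬝ᵥ X *ᵥ v := by
  simp [sub_mulVec, add_mulVec, smul_mulVec, one_mulVec, dotProduct_sub,
    dotProduct_add, dotProduct_smul, smul_eq_mul]
  ring

lemma psd_iff_feas {X Y : Matrix (Fin n) (Fin n) ℝ} (hX : X.IsHermitian) (hY : Y.IsHermitian)
    (ε α : ℝ) :
    (α • (Y + ε • (1 : Matrix (Fin n) (Fin n) ℝ)) - X).PosSemidef ↔ feas X Y ε α := by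
  have hXt : Xᵀ = X := by rw [← conjTranspose_eq_transpose_of_trivial]; exact hX.eq
  have hYt : Yᵀ = Y := by rw [← conjTranspose_eq_transpose_of_trivial]; exact hY.eq
  have hherm : (α • (Y + ε • (1 : Matrix (Fin n) (Fin n) ℝ)) - X).IsHermitian := by
    simp [Matrix.IsHermitian, conjTranspose_sub, conjTranspose_smul, conjTranspose_add,
      conjTranspose_one, hXt, hYt]
  constructor
  · intro h v
    have h2 := h.dotProduct_mulVec_nonneg v
    rw [star_trivial, expand_qform] at h2
    linarith
  · intro h
    refine .of_dotProduct_mulVec_nonneg hherm fun v => ?_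
    rw [star_trivial, expand_qform]
    linarith [h v]

lemma psd0_iff_feas {X Y : Matrix (Fin n) (Fin n) ℝ} (hX : X.IsHermitian) (hY : Y.IsHermitian)
    (α : ℝ) : (α • Y - X).PosSemidef ↔ feas X Y 0 α := by
  have := psd_iff_feas hX hY 0 α
  rwa [show Y + (0 : ℝ) • (1 : Matrix (Fin n) (Fin n) ℝ) = Y by simp] at this

lemma exists_factor_bound (A B : Matrix (Fin n) (Fin n) ℝ)
    (h : ∀ v, B *ᵥ v = 0 → A *ᵥ v = 0) :
    ∃ C : ℝ, 0 ≤ C ∧ ∀ v, ‖A *ᵥ v‖ ≤ C * ‖B *ᵥ v‖ := by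
  set fA := A.mulVecLin with hfA
  set fB := B.mulVecLin with hfB
  have hk : LinearMap.ker fB ≤ LinearMap.ker fA := by
    intro v hv
    rw [LinearMap.mem_ker] at hv ⊢
    exact h v hv
  set q : ((Fin n → ℝ) ⧸ LinearMap.ker fB) →ₗ[ℝ] (Fin n → ℝ) :=
    (LinearMap.ker fB).liftQ fA hk with hq
  set e := fB.quotKerEquivRange with he
  obtain ⟨g, hg⟩ := LinearMap.exists_extend (q ∘ₗ e.symm.toLinearMap)
  have key : ∀ v, A *ᵥ v = g (B *ᵥ v) := by
    intro v
    have hmem : fB v ∈ LinearMap.range fB := LinearMap.mem_range_self fB v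
    have h1 : e (Submodule.Quotient.mk v) = ⟨fB v, hmem⟩ :=
      Subtype.ext (fB.quotKerEquivRange_apply_mk v)
    have h2 := LinearMap.congr_fun hg ⟨fB v, hmem⟩
    have h3 : e.symm ⟨fB v, hmem⟩ = Submodule.Quotient.mk v := by
      rw [← h1, LinearEquiv.symm_apply_apply]
    simp only [LinearMap.comp_apply, Submodule.coe_subtype, LinearEquiv.coe_coe] at h2
    rw [h3] at h2
    have h4 : q (Submodule.Quotient.mk v) = fA v := Submodule.liftQ_apply _ fA v
    have h5 : g (fB v) = fA v := by rw [h2, h4]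
    simp only [hfA, hfB, Matrix.mulVecLin_apply] at h5
    exact h5.symm
  let G := LinearMap.toContinuousLinearMap g
  refine ⟨‖G‖, norm_nonneg _, fun v => ?_⟩
  have hGv : A *ᵥ v = G (B *ᵥ v) := by
    rw [key v]; rfl
  rw [hGv]
  exact G.le_opNorm _

lemma qform_factor (M : Matrix (Fin n) (Fin n) ℝ) (v : Fin n → ℝ) :
    v ⬝ᵥ (Mᴴ * M) *ᵥ v = (M *ᵥ v) ⬝ᵥ (M *ᵥ v) := by
  rw [← mulVec_mulVec, Matrix.dotProduct_mulVec, vecMul_conjTranspose]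
  simp

lemma exists_feas0 (X Y : Matrix (Fin n) (Fin n) ℝ) (hX : X.PosSemidef) (hY : Y.PosSemidef)
    (hker : ∀ v, Y *ᵥ v = 0 → X *ᵥ v = 0) :
    ∃ α : ℝ, 0 ≤ α ∧ feas X Y 0 α := by
  obtain ⟨A, hA⟩ : ∃ A : Matrix (Fin n) (Fin n) ℝ, X = Aᴴ * A := by
    open scoped MatrixOrder in
    obtain ⟨B, hB⟩ := CStarAlgebra.nonneg_iff_eq_star_mul_self.mp hX.nonneg
    exact ⟨B, hB⟩
  obtain ⟨B, hB⟩ : ∃ B : Matrix (Fin n) (Fin n) ℝ, Y = Bᴴ * B := by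
    open scoped MatrixOrder in
    obtain ⟨B, hB⟩ := CStarAlgebra.nonneg_iff_eq_star_mul_self.mp hY.nonneg
    exact ⟨B, hB⟩
  have hqX : ∀ v, v ⬝ᵥ X *ᵥ v = (A *ᵥ v) ⬝ᵥ (A *ᵥ v) := fun v => by
    rw [hA, qform_factor]
  have hqY : ∀ v, v ⬝ᵥ Y *ᵥ v = (B *ᵥ v) ⬝ᵥ (B *ᵥ v) := fun v => by
    rw [hB, qform_factor]
  have hk : ∀ v, B *ᵥ v = 0 → A *ᵥ v = 0 := by
    intro v hv
    have hYv : Y *ᵥ v = 0 := by rw [hB, ← mulVec_mulVec, hv, mulVec_zero]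
    have hXv := hker v hYv
    have h0 : (A *ᵥ v) ⬝ᵥ (A *ᵥ v) = 0 := by rw [← hqX, hXv, dotProduct_zero]
    exact dotProduct_self_eq_zero.mp h0
  obtain ⟨C, hC0, hC⟩ := exists_factor_bound A B hk
  refine ⟨n * C ^ 2, by positivity, fun v => ?_⟩
  have h1 := dot_le_norm_sq (A *ᵥ v)
  have h2 := norm_sq_le_dot (B *ᵥ v)
  have h3 := hC v
  have h4 : ‖A *ᵥ v‖ ^ 2 ≤ (C * ‖B *ᵥ v‖) ^ 2 := by
    exact pow_le_pow_left₀ (norm_nonneg _) h3 2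
  rw [hqX, hqY]
  have hn : (0 : ℝ) ≤ (n : ℝ) := Nat.cast_nonneg n
  calc (A *ᵥ v) ⬝ᵥ (A *ᵥ v) ≤ n * ‖A *ᵥ v‖ ^ 2 := h1
    _ ≤ n * (C * ‖B *ᵥ v‖) ^ 2 := mul_le_mul_of_nonneg_left h4 hn
    _ = n * C ^ 2 * ‖B *ᵥ v‖ ^ 2 := by ring
    _ ≤ n * C ^ 2 * ((B *ᵥ v) ⬝ᵥ (B *ᵥ v)) := by
        refine mul_le_mul_of_nonneg_left h2 (by positivity)
    _ = n * C ^ 2 * ((B *ᵥ v) ⬝ᵥ (B *ᵥ v) + 0 * (v ⬝ᵥ v)) := by ring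

lemma lamMax_le_of_feasible {X Y : Matrix (Fin n) (Fin n) ℝ} {α : ℝ} (h0 : 0 ≤ α)
    (h : (α • Y - X).PosSemidef) : lamMax X Y ≤ ENNReal.ofReal α :=
  iInf_le _ (⟨α, h0, h⟩ : {α : ℝ // 0 ≤ α ∧ (α • Y - X).PosSemidef})

lemma exists_lt_of_lamMax_lt {X Y : Matrix (Fin n) (Fin n) ℝ} {c : ℝ≥0∞}
    (h : lamMax X Y < c) :
    ∃ α : ℝ, 0 ≤ α ∧ (α • Y - X).PosSemidef ∧ ENNReal.ofReal α < c := by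
  rw [lamMax, iInf_lt_iff] at h
  obtain ⟨⟨α, h0, hp⟩, hlt⟩ := h
  exact ⟨α, h0, hp, hlt⟩

end Stmt9Aux

open Stmt9Aux

/-- For symmetric positive semidefinite `X, Y` with `ker Y ⊆ ker X`,
`λ_max(X, Y + εI) → λ_max(X,Y)` as `ε → 0⁺`. -/
theorem stmt_9 {n : ℕ} (X Y : Matrix (Fin n) (Fin n) ℝ)
    (hX : X.PosSemidef) (hY : Y.PosSemidef)
    (hker : ∀ v : Fin n → ℝ, Y *ᵥ v = 0 → X *ᵥ v = 0) :
    Tendsto (fun ε : ℝ => lamMax X (Y + ε • (1 : Matrix (Fin n) (Fin n) ℝ)))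
      (𝓝[>] (0 : ℝ)) (𝓝 (lamMax X Y)) := by
  classical
  obtain ⟨α₀, hα₀0, hα₀⟩ := exists_feas0 X Y hX hY hker
  have hpsd0_iff : ∀ α : ℝ, (α • Y - X).PosSemidef ↔ feas X Y 0 α :=
    fun α => psd0_iff_feas hX.1 hY.1 α
  have hpsd_iff : ∀ ε α : ℝ,
      (α • (Y + ε • (1 : Matrix (Fin n) (Fin n) ℝ)) - X).PosSemidef ↔ feas X Y ε α :=
    fun ε α => psd_iff_feas hX.1 hY.1 ε α
  set f : ℝ → ℝ≥0∞ := fun ε => lamMax X (Y + ε • (1 : Matrix (Fin n) (Fin n) ℝ)) with hf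
  set L := lamMax X Y with hL
  have hLle : L ≤ ENNReal.ofReal α₀ := lamMax_le_of_feasible hα₀0 ((hpsd0_iff α₀).mpr hα₀)
  have hLtop : L ≠ ⊤ := (hLle.trans_lt ENNReal.ofReal_lt_top).ne
  have hfeas_mono : ∀ {ε ε' α : ℝ}, ε ≤ ε' → 0 ≤ α → feas X Y ε α → feas X Y ε' α := by
    intro ε ε' α hee ha h v
    have h1 := h v
    have hvv := dot_self_nonneg v
    have h2 : α * (ε * (v ⬝ᵥ v)) ≤ α * (ε' * (v ⬝ᵥ v)) :=
      mul_le_mul_of_nonneg_left (mul_le_mul_of_nonneg_right hee hvv) ha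
    nlinarith [h1, h2]
  have hfleL : ∀ ε : ℝ, 0 ≤ ε → f ε ≤ L := by
    intro ε hε
    rw [hL, lamMax]
    refine le_iInf fun i => ?_
    obtain ⟨α, hα0, hpsd⟩ := i
    exact lamMax_le_of_feasible hα0
      ((hpsd_iff ε α).mpr (hfeas_mono hε hα0 ((hpsd0_iff α).mp hpsd)))
  have hmono : ∀ {ε ε' : ℝ}, 0 ≤ ε → ε ≤ ε' → f ε' ≤ f ε := by
    intro ε ε' hε hee
    rw [hf]
    show lamMax X (Y + ε' • 1) ≤ lamMax X (Y + ε • 1)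
    rw [lamMax]
    refine le_iInf fun i => ?_
    obtain ⟨α, hα0, hpsd⟩ := i
    exact lamMax_le_of_feasible hα0
      ((hpsd_iff ε' α).mpr (hfeas_mono hee hα0 ((hpsd_iff ε α).mp hpsd)))
  rw [tendsto_order]
  constructor
  · -- ∀ a < L, eventually a < f ε
    intro a ha
    by_contra hcon
    rw [Filter.not_eventually] at hcon
    have hcon' : ∃ᶠ ε in 𝓝[>] (0 : ℝ), f ε ≤ a := hcon.mono fun ε h => not_lt.mp h
    have hall : ∀ ε : ℝ, 0 < ε → f ε ≤ a := by
      intro ε hε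
      obtain ⟨ε', hfe', hε'⟩ :=
        (hcon'.and_eventually (eventually_of_mem
          (Ioo_mem_nhdsGT_of_mem ⟨le_refl (0 : ℝ), hε⟩) (fun x hx => hx))).exists
      exact (hmono hε'.1.le hε'.2.le).trans hfe'
    have hatop : a ≠ ⊤ := (ha.trans_le le_top).ne_top
    set a_r := a.toReal with har
    have har0 : 0 ≤ a_r := ENNReal.toReal_nonneg
    have hex : ∀ k : ℕ, ∃ α : ℝ,
        0 ≤ α ∧ α ≤ a_r + 1 / ((k : ℝ) + 1) ∧ feas X Y (1 / ((k : ℝ) + 1)) α := by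
      intro k
      have hk1 : (0 : ℝ) < 1 / ((k : ℝ) + 1) := by positivity
      have h1 : f (1 / ((k : ℝ) + 1)) ≤ a := hall _ hk1
      have h2 : a < ENNReal.ofReal (a_r + 1 / ((k : ℝ) + 1)) := by
        conv_lhs => rw [← ENNReal.ofReal_toReal hatop]
        rw [ENNReal.ofReal_lt_ofReal_iff (by positivity)]
        linarith
      have h3 : lamMax X (Y + (1 / ((k : ℝ) + 1)) • (1 : Matrix (Fin n) (Fin n) ℝ))
          < ENNReal.ofReal (a_r + 1 / ((k : ℝ) + 1)) := h1.trans_lt h2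
      obtain ⟨α, hα0, hpsd, hlt⟩ := exists_lt_of_lamMax_lt h3
      refine ⟨α, hα0, ?_, (hpsd_iff _ α).mp hpsd⟩
      have := (ENNReal.ofReal_lt_ofReal_iff_of_nonneg hα0).mp hlt
      linarith
    choose s hs0 hsle hsfeas using hex
    have hmem : ∀ k, s k ∈ Set.Icc (0 : ℝ) (a_r + 1) := by
      intro k
      refine ⟨hs0 k, (hsle k).trans ?_⟩
      have hk1 : 1 / ((k : ℝ) + 1) ≤ 1 := by
        rw [div_le_one (by positivity)]
        linarith [Nat.cast_nonneg (α := ℝ) k]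
      linarith
    obtain ⟨αs, hmemIcc, φ, hφ, hconv⟩ := (isCompact_Icc).tendsto_subseq hmem
    have htend0 : Tendsto (fun j => 1 / ((φ j : ℝ) + 1)) atTop (𝓝 0) :=
      tendsto_one_div_add_atTop_nhds_zero_nat.comp hφ.tendsto_atTop
    have hαle : αs ≤ a_r := by
      refine le_of_tendsto_of_tendsto' hconv ?_ (fun j => hsle (φ j))
      have := tendsto_const_nhds (x := a_r) (f := atTop (α := ℕ)) |>.add htend0
      simpa using this
    have hfeass : feas X Y 0 αs := by
      intro v
      have hj : ∀ j, v ⬝ᵥ X *ᵥ v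
          ≤ s (φ j) * (v ⬝ᵥ Y *ᵥ v + (1 / ((φ j : ℝ) + 1)) * (v ⬝ᵥ v)) :=
        fun j => hsfeas (φ j) v
      have ht : Tendsto
          (fun j => s (φ j) * (v ⬝ᵥ Y *ᵥ v + (1 / ((φ j : ℝ) + 1)) * (v ⬝ᵥ v))) atTop
          (𝓝 (αs * (v ⬝ᵥ Y *ᵥ v + 0 * (v ⬝ᵥ v)))) :=
        hconv.mul (tendsto_const_nhds.add (htend0.mul tendsto_const_nhds))
      exact ge_of_tendsto' ht hj
    have hcontr : L ≤ a := by
      calc L ≤ ENNReal.ofReal αs :=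
            lamMax_le_of_feasible hmemIcc.1 ((hpsd0_iff αs).mpr hfeass)
        _ ≤ ENNReal.ofReal a_r := ENNReal.ofReal_le_ofReal hαle
        _ = a := ENNReal.ofReal_toReal hatop
    exact absurd ha (not_lt.mpr hcontr)
  · intro a ha
    exact eventually_nhdsWithin_of_forall fun ε hε =>
      lt_of_le_of_lt (hfleL ε (le_of_lt hε)) ha
end

section
/- For K ∈ 𝕊ⁿ_{⪰0} and Q ∈ ℝ^{n×d}, inf{α ≥ 0 : [[K, Q],[Qᵀ, αI]] ⪰ 0} equals sup over unit vectors p̂ ∈ ℝ^d of sup over v ∈ ℝⁿ of (2p̂ᵀQᵀv − vᵀKv). -/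
open Matrix
open scoped ENNReal

lemma quad13 {n d : ℕ} (K : Matrix (Fin n) (Fin n) ℝ) (Q : Matrix (Fin n) (Fin d) ℝ)
    (α : ℝ) (v : Fin n → ℝ) (p : Fin d → ℝ) :
    Sum.elim v p ⬝ᵥ (Matrix.fromBlocks K Q Qᵀ (α • (1 : Matrix (Fin d) (Fin d) ℝ))) *ᵥ Sum.elim v p
      = v ⬝ᵥ K *ᵥ v + 2 * (p ⬝ᵥ Qᵀ *ᵥ v) + α * (p ⬝ᵥ p) := by
  have h1 : v ⬝ᵥ Q *ᵥ p = p ⬝ᵥ Qᵀ *ᵥ v := by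
    rw [dotProduct_mulVec, mulVec_transpose, dotProduct_comm]
  rw [fromBlocks_mulVec, sumElim_dotProduct_sumElim, smul_mulVec, one_mulVec,
    dotProduct_add, dotProduct_add, dotProduct_smul]
  simp only [Sum.elim_comp_inl, Sum.elim_comp_inr]
  rw [h1, smul_eq_mul]
  ring

lemma psd13 {n d : ℕ} (K : Matrix (Fin n) (Fin n) ℝ) (Q : Matrix (Fin n) (Fin d) ℝ)
    (hK : K.PosSemidef) (α : ℝ) (_hα : 0 ≤ α) :
    (Matrix.fromBlocks K Q Qᵀ (α • (1 : Matrix (Fin d) (Fin d) ℝ))).PosSemidef ↔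
      ∀ (p : Fin d → ℝ) (v : Fin n → ℝ), p ⬝ᵥ p = 1 →
        2 * (p ⬝ᵥ Qᵀ *ᵥ v) - v ⬝ᵥ K *ᵥ v ≤ α := by
  constructor
  · intro h p v hp
    have := h.dotProduct_mulVec_nonneg (Sum.elim v (-p))
    simp only [star_trivial] at this
    rw [quad13] at this
    simp only [neg_dotProduct, dotProduct_neg, neg_neg, hp, mul_one] at this
    linarith
  · intro h
    refine PosSemidef.of_dotProduct_mulVec_nonneg ?_ ?_
    · exact Matrix.IsHermitian.fromBlocks hK.1 rfl (by
        simp [Matrix.IsHermitian, Matrix.conjTranspose_smul, Matrix.conjTranspose_one])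
    · intro x
      have hx : Sum.elim (x ∘ Sum.inl) (x ∘ Sum.inr) = x := Sum.elim_comp_inl_inr x
      set v := x ∘ Sum.inl
      set p := x ∘ Sum.inr
      rw [star_trivial, ← hx, quad13]
      rcases eq_or_ne p 0 with hp | hp
      · have := hK.dotProduct_mulVec_nonneg v
        simp only [star_trivial] at this
        simp [hp, Matrix.mulVec_zero]
        positivity
      · have hpp : 0 < p ⬝ᵥ p := by
          have := Matrix.dotProduct_self_star_pos_iff (v := p) |>.2 hp
          simpa using this
        set c : ℝ := Real.sqrt (p ⬝ᵥ p) with hc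
        have hc0 : 0 < c := Real.sqrt_pos.2 hpp
        have hc2 : c * c = p ⬝ᵥ p := Real.mul_self_sqrt hpp.le
        have key := h (-(c⁻¹ • p)) (c⁻¹ • v) (by
          simp only [neg_dotProduct, dotProduct_neg, neg_neg, smul_dotProduct,
            dotProduct_smul, smul_eq_mul]
          field_simp
          linarith [hc2])
        simp only [neg_dotProduct, smul_dotProduct, Matrix.mulVec_smul,
          dotProduct_smul, smul_eq_mul] at key
        have key2 : -(2 * (p ⬝ᵥ Qᵀ *ᵥ v)) - v ⬝ᵥ K *ᵥ v ≤ α * (c * c) := by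
          have h2 := mul_le_mul_of_nonneg_left key (by positivity : (0:ℝ) ≤ c * c)
          calc -(2 * (p ⬝ᵥ Qᵀ *ᵥ v)) - v ⬝ᵥ K *ᵥ v
              = (c*c) * (2 * (c⁻¹ * -(c⁻¹ * (p ⬝ᵥ Qᵀ *ᵥ v))) - c⁻¹ * (c⁻¹ * (v ⬝ᵥ K *ᵥ v))) := by
                field_simp
            _ ≤ (c*c) * α := h2
            _ = α * (c * c) := mul_comm _ _
        rw [hc2] at key2
        linarith

/-- For `K ⪰ 0` and `Q ∈ ℝ^{n×d}`,
`inf {α ≥ 0 | [[K, Q],[Qᵀ, αI]] ⪰ 0}` equals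
`sup_{‖p̂‖=1} sup_{v} (2 p̂ᵀQᵀv − vᵀKv)`, both in `[0,∞]`. -/
theorem stmt_13 {n d : ℕ} (K : Matrix (Fin n) (Fin n) ℝ) (Q : Matrix (Fin n) (Fin d) ℝ)
    (hK : K.PosSemidef) :
    (⨅ α : {α : ℝ // 0 ≤ α ∧
        (Matrix.fromBlocks K Q Qᵀ ((α : ℝ) • (1 : Matrix (Fin d) (Fin d) ℝ))).PosSemidef},
      ENNReal.ofReal (α : ℝ)) =
    ⨆ p : {p : Fin d → ℝ // p ⬝ᵥ p = 1}, ⨆ v : Fin n → ℝ,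
      ENNReal.ofReal (2 * ((p : Fin d → ℝ) ⬝ᵥ (Qᵀ *ᵥ v)) - v ⬝ᵥ (K *ᵥ v)) := by
  set S := ⨆ p : {p : Fin d → ℝ // p ⬝ᵥ p = 1}, ⨆ v : Fin n → ℝ,
      ENNReal.ofReal (2 * ((p : Fin d → ℝ) ⬝ᵥ (Qᵀ *ᵥ v)) - v ⬝ᵥ (K *ᵥ v)) with hS
  apply le_antisymm
  · by_cases hT : S = ⊤
    · rw [hT]; exact le_top
    · have hfeas : ∀ (p : Fin d → ℝ) (v : Fin n → ℝ), p ⬝ᵥ p = 1 →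
          2 * (p ⬝ᵥ Qᵀ *ᵥ v) - v ⬝ᵥ K *ᵥ v ≤ S.toReal := by
        intro p v hp
        have hle : ENNReal.ofReal (2 * (p ⬝ᵥ Qᵀ *ᵥ v) - v ⬝ᵥ K *ᵥ v) ≤ S := by
          rw [hS]
          refine le_iSup_of_le ⟨p, hp⟩ ?_
          exact le_iSup (fun v => ENNReal.ofReal
            (2 * ((⟨p, hp⟩ : {p : Fin d → ℝ // p ⬝ᵥ p = 1}) : Fin d → ℝ) ⬝ᵥ Qᵀ *ᵥ v
              - v ⬝ᵥ K *ᵥ v)) v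
        exact (ENNReal.ofReal_le_iff_le_toReal hT).1 hle
      have hmem : 0 ≤ S.toReal ∧ (Matrix.fromBlocks K Q Qᵀ
          ((S.toReal : ℝ) • (1 : Matrix (Fin d) (Fin d) ℝ))).PosSemidef :=
        ⟨ENNReal.toReal_nonneg,
          (psd13 K Q hK S.toReal ENNReal.toReal_nonneg).2 fun p v hp => hfeas p v hp⟩
      have hle := iInf_le (fun α : {α : ℝ // 0 ≤ α ∧ (Matrix.fromBlocks K Q Qᵀ
          ((α : ℝ) • (1 : Matrix (Fin d) (Fin d) ℝ))).PosSemidef} =>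
          ENNReal.ofReal (α : ℝ)) ⟨S.toReal, hmem⟩
      simpa [ENNReal.ofReal_toReal hT] using hle
  · refine le_iInf fun α => ?_
    rw [hS]
    refine iSup_le fun p => iSup_le fun v => ENNReal.ofReal_le_ofReal ?_
    exact (psd13 K Q hK α α.2.1).1 α.2.2 p v p.2
end

section
/- Let K ∈ 𝕊ⁿ_{⪰0} and Q ∈ ℝ^{n×d} satisfy Im Q ⊆ Im K. Then there exists U ∈ ℝ^{n×d} with KU = Q, the matrix QᵀU is symmetric, and λ_max(QQᵀ, K) = λ_max(QᵀU), the maximum (standard) eigenvalue of QᵀU. -/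
open Matrix
open scoped ENNReal

private lemma dot_inner' {d : ℕ} (x y : EuclideanSpace ℝ (Fin d)) :
    (inner ℝ x y : ℝ) = dotProduct (x : Fin d → ℝ) (y : Fin d → ℝ) := by
  simp [PiLp.inner_apply, dotProduct, RCLike.inner_apply, conj_trivial, mul_comm]

private lemma dps_nonneg {k : ℕ} (v : Fin k → ℝ) : 0 ≤ v ⬝ᵥ v :=
  Finset.sum_nonneg fun i _ => mul_self_nonneg _

private lemma dps_pos {k : ℕ} {v : Fin k → ℝ} (hv : v ≠ 0) : 0 < v ⬝ᵥ v := by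
  rcases lt_or_eq_of_le (dps_nonneg v) with h | h
  · exact h
  · exact absurd (dotProduct_self_eq_zero.mp h.symm) hv

private lemma dp_left {m k : ℕ} (M : Matrix (Fin m) (Fin k) ℝ) (v : Fin k → ℝ)
    (w : Fin m → ℝ) : (M *ᵥ v) ⬝ᵥ w = v ⬝ᵥ (Mᵀ *ᵥ w) := by
  rw [dotProduct_comm, dotProduct_mulVec, ← vecMul_transpose, dotProduct_comm,
    transpose_transpose]

private lemma dp_right {m k : ℕ} (M : Matrix (Fin m) (Fin k) ℝ) (v : Fin k → ℝ)
    (w : Fin m → ℝ) : w ⬝ᵥ (M *ᵥ v) = (Mᵀ *ᵥ w) ⬝ᵥ v := by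
  rw [dotProduct_mulVec, ← vecMul_transpose, transpose_transpose]

private lemma rayleigh' {d : ℕ} {M : Matrix (Fin d) (Fin d) ℝ} (hM : M.IsHermitian) {μ : ℝ}
    (hμ : ∀ i, hM.eigenvalues i ≤ μ) (x : Fin d → ℝ) :
    x ⬝ᵥ (M *ᵥ x) ≤ μ * (x ⬝ᵥ x) := by
  classical
  set b := hM.eigenvectorBasis with hb
  have hMt : Mᵀ = M := by
    ext i j
    have := congr_fun (congr_fun hM.eq i) j
    simpa using this
  have h1 : ∀ i : Fin d, dotProduct (b i : Fin d → ℝ) (M *ᵥ x)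
      = hM.eigenvalues i * dotProduct (b i : Fin d → ℝ) x := by
    intro i
    have h2 : M *ᵥ (b i : Fin d → ℝ) = hM.eigenvalues i • (b i : Fin d → ℝ) :=
      hM.mulVec_eigenvectorBasis i
    rw [dotProduct_mulVec, ← mulVec_transpose, hMt, h2, smul_dotProduct, smul_eq_mul]
  have key1 := b.sum_inner_mul_inner (𝕜 := ℝ) (WithLp.toLp 2 x) (WithLp.toLp 2 (M *ᵥ x))
  have key2 := b.sum_inner_mul_inner (𝕜 := ℝ) (WithLp.toLp 2 x) (WithLp.toLp 2 x)
  simp only [dot_inner', WithLp.ofLp_toLp] at key1 key2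
  rw [← key1, ← key2, Finset.mul_sum]
  refine Finset.sum_le_sum fun i _ => ?_
  rw [h1 i, dotProduct_comm x (b i : Fin d → ℝ)]
  nlinarith [hμ i, mul_self_nonneg (dotProduct (b i : Fin d → ℝ) x)]

section
open scoped MatrixOrder
private lemma psd_sqrt' {n : ℕ} {K : Matrix (Fin n) (Fin n) ℝ} (hK : K.PosSemidef) :
    ∃ S : Matrix (Fin n) (Fin n) ℝ, S.PosSemidef ∧ S * S = K :=
  ⟨CFC.sqrt K, (CFC.sqrt_nonneg K).posSemidef, CFC.sqrt_mul_sqrt_self K hK.nonneg⟩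
end

/-- Let `K ⪰ 0` and `Q ∈ ℝ^{n×d}` with `Im Q ⊆ Im K`. Then there is
`U ∈ ℝ^{n×d}` with `KU = Q`, the matrix `QᵀU` is symmetric, and `λ_max(QQᵀ, K)` equals the
maximum (standard) eigenvalue of `QᵀU`. -/
theorem stmt_14 {n d : ℕ} (hd : 0 < d)
    (K : Matrix (Fin n) (Fin n) ℝ) (Q : Matrix (Fin n) (Fin d) ℝ)
    (hK : K.PosSemidef)
    (him : ∀ p : Fin d → ℝ, ∃ u : Fin n → ℝ, K *ᵥ u = Q *ᵥ p) :
    ∃ U : Matrix (Fin n) (Fin d) ℝ, K * U = Q ∧ (Qᵀ * U).IsSymm ∧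
      ∃ μ : ℝ,
        IsGreatest {μ' : ℝ | ∃ v : Fin d → ℝ, v ≠ 0 ∧ (Qᵀ * U) *ᵥ v = μ' • v} μ ∧
        lamMax (Q * Qᵀ) K = ENNReal.ofReal μ := by
  classical
  choose u hu using fun j : Fin d => him (Pi.single j 1)
  set U : Matrix (Fin n) (Fin d) ℝ := Matrix.of fun i j => u j i with hUdef
  have hKt : Kᵀ = K := by
    ext i j
    have := congr_fun (congr_fun hK.1.eq i) j
    simpa using this
  have hKU : K * U = Q := by
    ext i j
    have h := congr_fun (hu j) i
    rw [mulVec_single_one] at h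
    simpa [Matrix.mul_apply, Matrix.mulVec, dotProduct, hUdef] using h
  have hQt : Qᵀ = Uᵀ * K := by
    rw [← hKU, transpose_mul, hKt]
  have hUH : Uᴴ = Uᵀ := conjTranspose_eq_transpose_of_trivial U
  -- N := Qᵀ * U is PSD
  have hN : (Qᵀ * U).PosSemidef := by
    rw [hQt, Matrix.mul_assoc]
    have := hK.conjTranspose_mul_mul_same U
    rwa [hUH, Matrix.mul_assoc] at this
  set N := Qᵀ * U with hNdef
  have hNher : N.IsHermitian := hN.1
  have hNt : Nᵀ = N := by
    ext i j
    have := congr_fun (congr_fun hNher.eq i) j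
    simpa using this
  refine ⟨U, hKU, by rw [Matrix.IsSymm, ← hNdef, hNt], ?_⟩
  -- μ : maximum eigenvalue of N
  have hne : (Finset.univ : Finset (Fin d)).Nonempty := ⟨⟨0, hd⟩, Finset.mem_univ _⟩
  set μ := Finset.univ.sup' hne hNher.eigenvalues with hμdef
  have hμub : ∀ i, hNher.eigenvalues i ≤ μ := fun i =>
    Finset.le_sup' _ (Finset.mem_univ i)
  obtain ⟨i₀, -, hi₀⟩ := Finset.exists_mem_eq_sup' hne hNher.eigenvalues
  set v : Fin d → ℝ := (hNher.eigenvectorBasis i₀ : Fin d → ℝ) with hvdef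
  have hv0 : v ≠ 0 := by
    intro h
    have := hNher.eigenvectorBasis.orthonormal.ne_zero i₀
    exact this (by ext k; exact congr_fun h k)
  have hMv : N *ᵥ v = μ • v := by
    have h2 : N *ᵥ v = hNher.eigenvalues i₀ • v := hNher.mulVec_eigenvectorBasis i₀
    rw [hμdef, hi₀]
    exact h2
  have hvv : 0 < v ⬝ᵥ v := dps_pos hv0
  have hμ0 : 0 ≤ μ := by
    have h := hN.dotProduct_mulVec_nonneg v
    rw [star_trivial, hMv, dotProduct_smul, smul_eq_mul] at h
    nlinarith
  -- Rayleigh bound for N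
  have hray : ∀ x : Fin d → ℝ, x ⬝ᵥ (N *ᵥ x) ≤ μ * (x ⬝ᵥ x) := rayleigh' hNher hμub
  refine ⟨μ, ⟨⟨v, hv0, hMv⟩, ?_⟩, ?_⟩
  · -- upper bound on eigenvalues
    rintro μ' ⟨w, hw0, hw⟩
    have hww : 0 < w ⬝ᵥ w := dps_pos hw0
    have h := hray w
    rw [hw, dotProduct_smul, smul_eq_mul] at h
    exact le_of_mul_le_mul_right (by linarith [h]) hww
  · -- lamMax equality
    obtain ⟨S, hSpsd, hSS⟩ := psd_sqrt' hK
    have hSt : Sᵀ = S := by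
      ext i j
      have := congr_fun (congr_fun hSpsd.1.eq i) j
      simpa using this
    set A := S * U with hAdef
    have hAtA : Aᵀ * A = N := by
      rw [hAdef, transpose_mul, hSt, hNdef, hQt, Matrix.mul_assoc, ← Matrix.mul_assoc S S U,
        hSS, Matrix.mul_assoc]
    have hPSD : (μ • K - Q * Qᵀ).PosSemidef := by
      refine Matrix.PosSemidef.of_dotProduct_mulVec_nonneg ?_ ?_
      · have h1 : (Q * Qᵀ).IsHermitian := by
          have := isHermitian_mul_conjTranspose_self Q
          rwa [conjTranspose_eq_transpose_of_trivial] at this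
        have h2 : (μ • K).IsHermitian := by
          unfold Matrix.IsHermitian
          rw [conjTranspose_smul, hK.1.eq, star_trivial]
        exact h2.sub h1
      · intro x
        rw [star_trivial, sub_mulVec, dotProduct_sub, smul_mulVec, dotProduct_smul,
          smul_eq_mul, sub_nonneg]
        set y := S *ᵥ x with hydef
        set w := Aᵀ *ᵥ y with hwdef
        have hxKx : x ⬝ᵥ (K *ᵥ x) = y ⬝ᵥ y := by
          rw [← hSS, ← mulVec_mulVec, dp_right, hSt]
        have hQtx : Qᵀ *ᵥ x = w := by
          rw [hwdef, hydef, mulVec_mulVec, hAdef, transpose_mul, hSt, Matrix.mul_assoc,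
            hSS, ← hQt]
        have hxQQx : x ⬝ᵥ ((Q * Qᵀ) *ᵥ x) = w ⬝ᵥ w := by
          rw [← mulVec_mulVec, dp_right, hQtx]
        rw [hxKx, hxQQx]
        -- show w ⬝ᵥ w ≤ μ * (y ⬝ᵥ y)
        set z := A *ᵥ w with hzdef
        have hzz : z ⬝ᵥ z ≤ μ * (w ⬝ᵥ w) := by
          have h := hray w
          rw [← hAtA, ← mulVec_mulVec, dp_right, transpose_transpose, ← hzdef] at h
          exact h
        have hwy : w ⬝ᵥ w = y ⬝ᵥ z := by
          rw [hwdef, dp_left, transpose_transpose, ← hzdef]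
        have hcs : (y ⬝ᵥ z) * (y ⬝ᵥ z) ≤ (y ⬝ᵥ y) * (z ⬝ᵥ z) := by
          have h := Finset.sum_mul_sq_le_sq_mul_sq Finset.univ y z
          simp only [sq] at h
          exact h
        rcases eq_or_lt_of_le (dps_nonneg w) with h0 | h0
        · rw [← h0]
          exact mul_nonneg hμ0 (dps_nonneg y)
        · nlinarith [hcs, hzz, hwy, h0, dps_nonneg y]
    refine le_antisymm (iInf_le_of_le ⟨μ, hμ0, hPSD⟩ le_rfl) ?_
    refine le_iInf fun α => ENNReal.ofReal_le_ofReal ?_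
    obtain ⟨α, hα0, hαPSD⟩ := α
    -- show μ ≤ α
    have h := hαPSD.dotProduct_mulVec_nonneg (U *ᵥ v)
    rw [star_trivial, sub_mulVec, dotProduct_sub, smul_mulVec, dotProduct_smul,
      smul_eq_mul, sub_nonneg] at h
    have hQUv : Qᵀ *ᵥ (U *ᵥ v) = μ • v := by
      rw [mulVec_mulVec, ← hNdef, hMv]
    have h1 : (U *ᵥ v) ⬝ᵥ (K *ᵥ (U *ᵥ v)) = μ * (v ⬝ᵥ v) := by
      rw [dp_left, mulVec_mulVec, mulVec_mulVec, ← hQt, ← hNdef, hMv, dotProduct_smul,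
        smul_eq_mul]
    have h2 : (U *ᵥ v) ⬝ᵥ ((Q * Qᵀ) *ᵥ (U *ᵥ v)) = μ * μ * (v ⬝ᵥ v) := by
      rw [← mulVec_mulVec, dp_right, hQUv]
      rw [smul_dotProduct, dotProduct_smul, smul_eq_mul, smul_eq_mul]
      ring
    rw [h1, h2] at h
    clear_value μ v
    rcases eq_or_lt_of_le hμ0 with h0 | h0
    · linarith
    · by_contra hc
      push_neg at hc
      have h3 : α * (μ * (v ⬝ᵥ v)) < μ * (μ * (v ⬝ᵥ v)) :=
        mul_lt_mul_of_pos_right hc (mul_pos h0 hvv)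
      have h4 : μ * (μ * (v ⬝ᵥ v)) = μ * μ * (v ⬝ᵥ v) := by ring
      linarith
end

section
/- Define the extended minimum generalized eigenvalue λ_min(X,Y) = inf_{v ∉ ker Y} (vᵀXv)/(vᵀYv) for Y ≠ 0 (and λ_min(X,0) = ∞). Then for Y ≠ 0, λ_min(X,Y) = sup{α ≥ 0 : X − αY ⪰ 0} (with sup ∅ = 0), and λ_min is nonnegative, upper semicontinuous and quasiconcave on 𝕊ⁿ_{⪰0} × 𝕊ⁿ_{⪰0}. -/
open Matrix
open scoped ENNReal

/-- Extended minimum generalized eigenvalue: `sup {α ≥ 0 | X − αY ⪰ 0}` with `sup ∅ = 0`.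
(For `Y = 0` and `X ⪰ 0` this gives `∞`, matching `λ_min(X,0) = ∞`.) -/
noncomputable def lamMin {n : ℕ} (X Y : Matrix (Fin n) (Fin n) ℝ) : ℝ≥0∞ :=
  ⨆ α : {α : ℝ // 0 ≤ α ∧ (X - α • Y).PosSemidef}, ENNReal.ofReal (α : ℝ)

namespace Stmt17Aux

variable {n : ℕ}

lemma smul_psd {c : ℝ} (hc : 0 ≤ c) {M : Matrix (Fin n) (Fin n) ℝ}
    (hM : M.PosSemidef) : (c • M).PosSemidef := by
  refine Matrix.PosSemidef.of_dotProduct_mulVec_nonneg ?_ fun x => ?_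
  · unfold Matrix.IsHermitian
    rw [conjTranspose_smul, hM.1]
    simp
  · rw [smul_mulVec, dotProduct_smul, smul_eq_mul]
    exact mul_nonneg hc (hM.dotProduct_mulVec_nonneg x)

lemma hermitian_sub_smul {X Y : Matrix (Fin n) (Fin n) ℝ} (hX : X.IsHermitian)
    (hY : Y.IsHermitian) (c : ℝ) : (X - c • Y).IsHermitian := by
  unfold Matrix.IsHermitian
  rw [conjTranspose_sub, conjTranspose_smul, hX, hY]
  simp

lemma dot_pos {Y : Matrix (Fin n) (Fin n) ℝ} (hY : Y.PosSemidef) {v : Fin n → ℝ}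
    (hv : Y *ᵥ v ≠ 0) : 0 < v ⬝ᵥ (Y *ᵥ v) := by
  have h0 : star v ⬝ᵥ (Y *ᵥ v) ≠ 0 := fun h => hv ((hY.dotProduct_mulVec_zero_iff v).mp h)
  have hnn := hY.dotProduct_mulVec_nonneg v
  simp only [star_trivial] at h0 hnn
  exact lt_of_le_of_ne hnn (Ne.symm h0)

/-- Key characterization: for `X, Y` PSD and `α ≥ 0`,
`ofReal α ≤ lamMin X Y ↔ (X - α • Y).PosSemidef`. -/
lemma le_lamMin_iff {X Y : Matrix (Fin n) (Fin n) ℝ} (hX : X.PosSemidef)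
    (hY : Y.PosSemidef) {α : ℝ} (hα : 0 ≤ α) :
    ENNReal.ofReal α ≤ lamMin X Y ↔ (X - α • Y).PosSemidef := by
  constructor
  · intro hle
    -- every 0 ≤ β < α is feasible
    have hfeas : ∀ β : ℝ, 0 ≤ β → β < α → (X - β • Y).PosSemidef := by
      intro β hβ0 hβα
      have h1 : ENNReal.ofReal β < lamMin X Y :=
        lt_of_lt_of_le (by exact_mod_cast ENNReal.ofReal_lt_ofReal_iff_of_nonneg hβ0 |>.mpr hβα)
          hle
      rw [lamMin, lt_iSup_iff] at h1
      obtain ⟨⟨γ, hγ0, hγpsd⟩, hγ⟩ := h1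
      have hβγ : β ≤ γ := by
        by_contra h
        push_neg at h
        exact absurd (ENNReal.ofReal_le_ofReal h.le) (not_le.mpr hγ)
      have : X - β • Y = (X - γ • Y) + (γ - β) • Y := by
        rw [sub_smul]; abel
      rw [this]
      exact hγpsd.add (smul_psd (by linarith) hY)
    refine Matrix.PosSemidef.of_dotProduct_mulVec_nonneg (hermitian_sub_smul hX.1 hY.1 α) fun v => ?_
    have hq : ∀ β : ℝ, β < α → β * (v ⬝ᵥ (Y *ᵥ v)) ≤ v ⬝ᵥ (X *ᵥ v) := by
      intro β hβα
      rcases le_or_gt 0 β with hβ0 | hβ0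
      · have := (hfeas β hβ0 hβα).dotProduct_mulVec_nonneg v
        simp only [star_trivial, sub_mulVec, smul_mulVec, dotProduct_sub,
          dotProduct_smul, smul_eq_mul, sub_nonneg] at this
        exact this
      · have h1 : β * (v ⬝ᵥ (Y *ᵥ v)) ≤ 0 :=
          mul_nonpos_of_nonpos_of_nonneg hβ0.le (by simpa using hY.dotProduct_mulVec_nonneg v)
        have h2 : 0 ≤ v ⬝ᵥ (X *ᵥ v) := by simpa using hX.dotProduct_mulVec_nonneg v
        linarith
    have key : α * (v ⬝ᵥ (Y *ᵥ v)) ≤ v ⬝ᵥ (X *ᵥ v) := by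
      rcases eq_or_lt_of_le (show (0:ℝ) ≤ v ⬝ᵥ (Y *ᵥ v) by simpa using hY.dotProduct_mulVec_nonneg v) with h | h
      · rw [← h, mul_zero]; simpa using hX.dotProduct_mulVec_nonneg v
      · have : α ≤ (v ⬝ᵥ (X *ᵥ v)) / (v ⬝ᵥ (Y *ᵥ v)) := by
          by_contra hcon
          push_neg at hcon
          obtain ⟨β, h1, h2⟩ := exists_between hcon
          have h3 := hq β h2
          rw [div_lt_iff₀ h] at h1
          linarith
        calc α * (v ⬝ᵥ (Y *ᵥ v)) ≤ ((v ⬝ᵥ (X *ᵥ v)) / (v ⬝ᵥ (Y *ᵥ v))) * (v ⬝ᵥ (Y *ᵥ v)) :=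
              mul_le_mul_of_nonneg_right this h.le
          _ = v ⬝ᵥ (X *ᵥ v) := div_mul_cancel₀ _ h.ne'
    simp only [star_trivial, sub_mulVec, smul_mulVec, dotProduct_sub,
      dotProduct_smul, smul_eq_mul, sub_nonneg]
    exact key
  · intro hpsd
    exact le_iSup (fun β : {β : ℝ // 0 ≤ β ∧ (X - β • Y).PosSemidef} =>
      ENNReal.ofReal (β : ℝ)) ⟨α, hα, hpsd⟩

lemma psd_closed : IsClosed {M : Matrix (Fin n) (Fin n) ℝ | M.PosSemidef} := by
  have : {M : Matrix (Fin n) (Fin n) ℝ | M.PosSemidef} =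
      {M | Mᴴ = M} ∩ ⋂ v : Fin n → ℝ, {M | 0 ≤ star v ⬝ᵥ (M *ᵥ v)} := by
    ext M
    simp only [Set.mem_setOf_eq, Set.mem_inter_iff, Set.mem_iInter]
    exact Matrix.posSemidef_iff_dotProduct_mulVec
  rw [this]
  refine IsClosed.inter (isClosed_eq continuous_id.matrix_conjTranspose continuous_id)
    (isClosed_iInter fun v => isClosed_le continuous_const ?_)
  exact Continuous.dotProduct continuous_const
    (continuous_id.matrix_mulVec continuous_const)

end Stmt17Aux

/-- For PSD `X, Y` with `Y ≠ 0`, the infimum over `v ∉ ker Y` of the Rayleigh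
quotient `(vᵀXv)/(vᵀYv)` equals `sup {α ≥ 0 | X − αY ⪰ 0}`; and `λ_min` is nonnegative,
upper semicontinuous and quasiconcave on `𝕊ⁿ_{⪰0} × 𝕊ⁿ_{⪰0}`: its superlevel sets are
closed and convex. -/
theorem stmt_17 {n : ℕ} :
    (∀ X Y : Matrix (Fin n) (Fin n) ℝ, X.PosSemidef → Y.PosSemidef → Y ≠ 0 →
      (⨅ v : {v : Fin n → ℝ // Y *ᵥ v ≠ 0},
          ENNReal.ofReal (((v : Fin n → ℝ) ⬝ᵥ (X *ᵥ (v : Fin n → ℝ))) /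
            ((v : Fin n → ℝ) ⬝ᵥ (Y *ᵥ (v : Fin n → ℝ))))) = lamMin X Y) ∧
    (∀ α : ℝ,
      IsClosed {p : Matrix (Fin n) (Fin n) ℝ × Matrix (Fin n) (Fin n) ℝ |
        p.1.PosSemidef ∧ p.2.PosSemidef ∧ ENNReal.ofReal α ≤ lamMin p.1 p.2} ∧
      Convex ℝ {p : Matrix (Fin n) (Fin n) ℝ × Matrix (Fin n) (Fin n) ℝ |
        p.1.PosSemidef ∧ p.2.PosSemidef ∧ ENNReal.ofReal α ≤ lamMin p.1 p.2}) := by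
  constructor
  · intro X Y hX hY hY0
    -- the index type is nonempty
    have hne : ∃ v : Fin n → ℝ, Y *ᵥ v ≠ 0 := by
      by_contra h
      push_neg at h
      apply hY0
      ext i j
      have := congrFun (h (Pi.single j 1)) i
      simpa [mulVec_single] using this
    obtain ⟨v₀, hv₀⟩ := hne
    haveI : Nonempty {v : Fin n → ℝ // Y *ᵥ v ≠ 0} := ⟨⟨v₀, hv₀⟩⟩
    set I := ⨅ v : {v : Fin n → ℝ // Y *ᵥ v ≠ 0},
        ENNReal.ofReal (((v : Fin n → ℝ) ⬝ᵥ (X *ᵥ (v : Fin n → ℝ))) /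
          ((v : Fin n → ℝ) ⬝ᵥ (Y *ᵥ (v : Fin n → ℝ)))) with hI
    have hItop : I ≠ ⊤ := by
      refine ne_top_of_le_ne_top ?_ (iInf_le _ ⟨v₀, hv₀⟩)
      exact ENNReal.ofReal_ne_top
    apply le_antisymm
    · -- I ≤ lamMin : take β = I.toReal, show it is feasible
      set β := I.toReal with hβ
      have hβ0 : 0 ≤ β := ENNReal.toReal_nonneg
      have hβle : ∀ v : Fin n → ℝ, Y *ᵥ v ≠ 0 →
          β ≤ (v ⬝ᵥ (X *ᵥ v)) / (v ⬝ᵥ (Y *ᵥ v)) := by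
        intro v hv
        have h1 : I ≤ ENNReal.ofReal ((v ⬝ᵥ (X *ᵥ v)) / (v ⬝ᵥ (Y *ᵥ v))) :=
          iInf_le (fun v : {v : Fin n → ℝ // Y *ᵥ v ≠ 0} =>
            ENNReal.ofReal (((v : Fin n → ℝ) ⬝ᵥ (X *ᵥ (v : Fin n → ℝ))) /
              ((v : Fin n → ℝ) ⬝ᵥ (Y *ᵥ (v : Fin n → ℝ))))) ⟨v, hv⟩
        have hqnn : 0 ≤ (v ⬝ᵥ (X *ᵥ v)) / (v ⬝ᵥ (Y *ᵥ v)) :=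
          div_nonneg (by simpa using hX.dotProduct_mulVec_nonneg v) (by simpa using hY.dotProduct_mulVec_nonneg v)
        calc β ≤ (ENNReal.ofReal ((v ⬝ᵥ (X *ᵥ v)) / (v ⬝ᵥ (Y *ᵥ v)))).toReal :=
              ENNReal.toReal_mono ENNReal.ofReal_ne_top h1
          _ = _ := ENNReal.toReal_ofReal hqnn
      have hpsd : (X - β • Y).PosSemidef := by
        refine Matrix.PosSemidef.of_dotProduct_mulVec_nonneg (Stmt17Aux.hermitian_sub_smul hX.1 hY.1 β) fun v => ?_
        simp only [star_trivial, sub_mulVec, smul_mulVec, dotProduct_sub,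
          dotProduct_smul, smul_eq_mul, sub_nonneg]
        by_cases hv : Y *ᵥ v = 0
        · rw [hv]
          simpa using hX.dotProduct_mulVec_nonneg v
        · have hd := Stmt17Aux.dot_pos hY hv
          have := hβle v hv
          rw [le_div_iff₀ hd] at this
          linarith
      have : ENNReal.ofReal β ≤ lamMin X Y :=
        le_iSup (fun γ : {γ : ℝ // 0 ≤ γ ∧ (X - γ • Y).PosSemidef} =>
          ENNReal.ofReal (γ : ℝ)) ⟨β, hβ0, hpsd⟩
      rwa [hβ, ENNReal.ofReal_toReal hItop] at this
    · -- lamMin ≤ I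
      refine iSup_le fun ⟨γ, hγ0, hγpsd⟩ => le_iInf fun ⟨v, hv⟩ => ?_
      have hd := Stmt17Aux.dot_pos hY hv
      have h1 := hγpsd.dotProduct_mulVec_nonneg v
      simp only [star_trivial, sub_mulVec, smul_mulVec, dotProduct_sub,
        dotProduct_smul, smul_eq_mul, sub_nonneg] at h1
      exact ENNReal.ofReal_le_ofReal ((le_div_iff₀ hd).mpr h1)
  · intro α
    set α' := max α 0 with hα'
    have hα'0 : 0 ≤ α' := le_max_right _ _
    have hoe : ENNReal.ofReal α = ENNReal.ofReal α' := by
      rcases le_or_gt α 0 with h | h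
      · rw [ENNReal.ofReal_of_nonpos h, hα', max_eq_right h, ENNReal.ofReal_zero]
      · rw [hα', max_eq_left h.le]
    have hset : {p : Matrix (Fin n) (Fin n) ℝ × Matrix (Fin n) (Fin n) ℝ |
        p.1.PosSemidef ∧ p.2.PosSemidef ∧ ENNReal.ofReal α ≤ lamMin p.1 p.2} =
        {p : Matrix (Fin n) (Fin n) ℝ × Matrix (Fin n) (Fin n) ℝ |
        p.1.PosSemidef ∧ p.2.PosSemidef ∧ (p.1 - α' • p.2).PosSemidef} := by
      ext ⟨X, Y⟩
      simp only [Set.mem_setOf_eq]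
      constructor
      · rintro ⟨hX, hY, hle⟩
        exact ⟨hX, hY, (Stmt17Aux.le_lamMin_iff hX hY hα'0).mp (hoe ▸ hle)⟩
      · rintro ⟨hX, hY, hpsd⟩
        exact ⟨hX, hY, hoe ▸ (Stmt17Aux.le_lamMin_iff hX hY hα'0).mpr hpsd⟩
    rw [hset]
    constructor
    · have h1 : IsClosed {p : Matrix (Fin n) (Fin n) ℝ × Matrix (Fin n) (Fin n) ℝ |
          p.1.PosSemidef} := Stmt17Aux.psd_closed.preimage continuous_fst
      have h2 : IsClosed {p : Matrix (Fin n) (Fin n) ℝ × Matrix (Fin n) (Fin n) ℝ |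
          p.2.PosSemidef} := Stmt17Aux.psd_closed.preimage continuous_snd
      have h3 : IsClosed {p : Matrix (Fin n) (Fin n) ℝ × Matrix (Fin n) (Fin n) ℝ |
          (p.1 - α' • p.2).PosSemidef} :=
        Stmt17Aux.psd_closed.preimage (continuous_fst.sub (continuous_snd.const_smul α'))
      exact h1.inter (h2.inter h3)
    · rintro ⟨X₁, Y₁⟩ ⟨hX₁, hY₁, hP₁⟩ ⟨X₂, Y₂⟩ ⟨hX₂, hY₂, hP₂⟩ a b ha hb hab
      refine ⟨(Stmt17Aux.smul_psd ha hX₁).add (Stmt17Aux.smul_psd hb hX₂),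
        (Stmt17Aux.smul_psd ha hY₁).add (Stmt17Aux.smul_psd hb hY₂), ?_⟩
      have : (a • (X₁, Y₁) + b • (X₂, Y₂)).1 - α' • (a • (X₁, Y₁) + b • (X₂, Y₂)).2 =
          a • (X₁ - α' • Y₁) + b • (X₂ - α' • Y₂) := by
        simp only [Prod.smul_fst, Prod.smul_snd, Prod.fst_add, Prod.snd_add, smul_sub,
          smul_add, smul_smul, mul_comm]
        abel
      rw [this]
      exact (Stmt17Aux.smul_psd ha hP₁).add (Stmt17Aux.smul_psd hb hP₂)
end
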